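/- Let T be a tree on a finite vertex type, let β and γ be real numbers, let H(T) = β·D(T) + γ·A(T), and let e = uv be an edge of T. Then det(x·I − H(T)) = det(x·I − H(T − e)) − β·det(x·I − H_v(T − e)) − β·det(x·I − H_u(T − e)) + (β² − γ²)·det(x·I − H_{uv}(T)), where H(T − e) = β·D(T − e) + γ·A(T − e). -/

import Mathlib

open Polynomial Matrix

attribute [local instance] Classical.propDecidable

noncomputable section

/-- The permanent of a square matrix: `per M = ∑_{σ} ∏_i M i (σ i)`. -/
def Matrix.per {n R : Type*} [Fintype n] [DecidableEq n] [CommRing R]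
    (M : Matrix n n R) : R :=
  ∑ σ : Equiv.Perm n, ∏ i, M i (σ i)

/-- The characteristic polynomial `φ(M) = det (x·I - M)`. -/
def phi {n R : Type*} [Fintype n] [DecidableEq n] [CommRing R]
    (M : Matrix n n (Polynomial R)) : Polynomial R :=
  ((Polynomial.X : Polynomial R) • (1 : Matrix n n (Polynomial R)) - M).det

/-- The permanental polynomial `ψ(M) = per (x·I - M)`. -/
def psi {n R : Type*} [Fintype n] [DecidableEq n] [CommRing R]
    (M : Matrix n n (Polynomial R)) : Polynomial R :=
  ((Polynomial.X : Polynomial R) • (1 : Matrix n n (Polynomial R)) - M).per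

variable {V : Type*}

/-- The principal submatrix of `M` obtained by deleting the rows and columns indexed by `S`. -/
def delSub {R : Type*} (M : Matrix V V R) (S : Set V) :
    Matrix {w : V // w ∉ S} {w : V // w ∉ S} R :=
  M.submatrix Subtype.val Subtype.val

/-- `C` is a cycle of `G`: a subgraph of `G` that is connected, has nonempty vertex set,
and in which every vertex of `C` has degree exactly `2` in `C`. -/
def IsCycleSub (G : SimpleGraph V) (C : G.Subgraph) : Prop :=
  C.Connected ∧ C.verts.Nonempty ∧ ∀ w ∈ C.verts, (C.neighborSet w).ncard = 2

variable [Fintype V] [DecidableEq V]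

/-- The degree diagonal matrix `D(G)` of a graph. -/
def degMat (R : Type*) [CommRing R] (G : SimpleGraph V) [DecidableRel G.Adj] :
    Matrix V V R :=
  Matrix.diagonal fun w => (G.degree w : R)

/-- The linear combination matrix `H(G) = β·D(G) + γ·A(G)` over `ℝ[x]`. -/
def hMat (β γ : ℝ) (G : SimpleGraph V) [DecidableRel G.Adj] :
    Matrix V V (Polynomial ℝ) :=
  Polynomial.C β • degMat (Polynomial ℝ) G + Polynomial.C γ • G.adjMatrix (Polynomial ℝ)


section AuxLemmas
set_option linter.unusedSectionVars false
variable {R : Type*} [CommRing R]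

lemma det_block (p : V → Prop) (A : Matrix V V R)
    (h : ∀ i j, p i → ¬ p j → A i j = 0) :
    A.det = (A.submatrix (Subtype.val : {w // p w} → V) Subtype.val).det *
      (A.submatrix (Subtype.val : {w // ¬ p w} → V) Subtype.val).det := by
  classical
  rw [← Matrix.det_submatrix_equiv_self (Equiv.sumCompl p) A]
  have hb : A.submatrix (Equiv.sumCompl p) (Equiv.sumCompl p)
      = Matrix.fromBlocks (A.submatrix Subtype.val Subtype.val) 0
        (A.submatrix Subtype.val Subtype.val) (A.submatrix Subtype.val Subtype.val) := by
    ext i j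
    rcases i with i | i <;> rcases j with j | j
    · simp [Matrix.fromBlocks]
    · simp [Matrix.fromBlocks, h _ _ i.2 j.2]
    · simp [Matrix.fromBlocks]
    · simp [Matrix.fromBlocks]
  rw [hb, Matrix.det_fromBlocks_zero₁₂]

lemma updateRow_comm (M : Matrix V V R) {i j : V} (hij : i ≠ j) (r s : V → R) :
    (M.updateRow i r).updateRow j s = (M.updateRow j s).updateRow i r := by
  ext a b
  rcases eq_or_ne a j with rfl | haj
  · rw [Matrix.updateRow_self, Matrix.updateRow_ne hij.symm, Matrix.updateRow_self]
  · rw [Matrix.updateRow_ne haj]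
    rcases eq_or_ne a i with rfl | hai
    · rw [Matrix.updateRow_self, Matrix.updateRow_self]
    · rw [Matrix.updateRow_ne hai, Matrix.updateRow_ne hai, Matrix.updateRow_ne haj]

lemma det_single_self (A : Matrix V V R) (i : V) :
    (A.updateRow i (Pi.single i 1)).det = (delSub A ({i} : Set V)).det := by
  classical
  rw [det_block (fun w => w ∈ ({i} : Set V)) _ ?_]
  · have h1 : ((A.updateRow i (Pi.single i 1)).submatrix
        (Subtype.val : {w // w ∈ ({i} : Set V)} → V) Subtype.val)
        = (1 : Matrix {w // w ∈ ({i} : Set V)} {w // w ∈ ({i} : Set V)} R) := by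
      ext a b
      have ha : a.val = i := a.2
      have hb : b.val = i := b.2
      have hab : a = b := Subtype.ext (ha.trans hb.symm)
      simp [Matrix.submatrix, ha, hb, hab, Matrix.one_apply]
    have h2 : ((A.updateRow i (Pi.single i 1)).submatrix
        (Subtype.val : {w // w ∉ ({i} : Set V)} → V) Subtype.val) = delSub A {i} := by
      ext a b
      have ha : a.val ≠ i := a.2
      simp [delSub, Matrix.submatrix, Matrix.updateRow_ne ha]
    have hone : ∀ (I : Fintype {w : V // w ∈ ({i} : Set V)}),
        @Matrix.det _ _ I R _ 1 = 1 := fun I => @Matrix.det_one _ _ I R _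
    rw [h1, h2, hone, one_mul]
    congr!
  · intro a b ha hb
    have ha' : a = i := ha
    have hb' : b ≠ i := hb
    subst ha'
    simp [Pi.single_eq_of_ne hb']

lemma det_single_pair (A : Matrix V V R) {u v : V} (huv : u ≠ v) :
    ((A.updateRow v (Pi.single v 1)).updateRow u (Pi.single u 1)).det
      = (delSub A ({u, v} : Set V)).det := by
  classical
  set B := (A.updateRow v (Pi.single v 1)).updateRow u (Pi.single u 1) with hB
  have hBu : B u = Pi.single u 1 := Matrix.updateRow_self
  have hBv : B v = Pi.single v 1 := by
    rw [hB, Matrix.updateRow_ne huv.symm, Matrix.updateRow_self]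
  have hBw : ∀ w, w ≠ u → w ≠ v → B w = A w := by
    intro w hwu hwv
    rw [hB, Matrix.updateRow_ne hwu, Matrix.updateRow_ne hwv]
  rw [det_block (fun w => w ∈ ({u, v} : Set V)) _ ?_]
  · have h1 : (B.submatrix (Subtype.val : {w // w ∈ ({u, v} : Set V)} → V) Subtype.val)
        = (1 : Matrix {w // w ∈ ({u, v} : Set V)} {w // w ∈ ({u, v} : Set V)} R) := by
      ext a b
      rw [Matrix.submatrix_apply, Matrix.one_apply]
      rcases a.2 with ha | ha' <;> rcases b.2 with hb | hb'
      · have hab : a = b := Subtype.ext (ha.trans hb.symm)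
        rw [ha, hb]
        simp [hBu, hab]
      · have hb : (b : V) = v := hb'
        have hab : a ≠ b := fun h => huv ((ha.symm.trans (congrArg _ h)).trans hb)
        rw [ha, hb]
        simp [hBu, Pi.single_apply, huv.symm, hab]
      · have ha : (a : V) = v := ha'
        have hab : a ≠ b := fun h => huv ((hb.symm.trans (congrArg Subtype.val h.symm)).trans ha)
        rw [ha, hb]
        simp [hBv, Pi.single_apply, huv, hab]
      · have ha : (a : V) = v := ha'
        have hb : (b : V) = v := hb'
        have hab : a = b := Subtype.ext (ha.trans hb.symm)
        rw [ha, hb]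
        simp [hBv, hab]
    have h2 : (B.submatrix (Subtype.val : {w // w ∉ ({u, v} : Set V)} → V) Subtype.val)
        = delSub A {u, v} := by
      ext a b
      have ha := a.2
      simp only [Set.mem_insert_iff, Set.mem_singleton_iff, not_or] at ha
      simp [delSub, Matrix.submatrix, hBw a.val ha.1 ha.2]
    have hone : ∀ (I : Fintype {w : V // w ∈ ({u, v} : Set V)}),
        @Matrix.det _ _ I R _ 1 = 1 := fun I => @Matrix.det_one _ _ I R _
    rw [h1, h2, hone, one_mul]
    congr!
  · intro a b ha hb
    simp only [Set.mem_insert_iff, Set.mem_singleton_iff, not_or] at ha hb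
    rcases ha with rfl | rfl
    · rw [hBu]; exact Pi.single_eq_of_ne hb.1 _
    · rw [hBv]; exact Pi.single_eq_of_ne hb.2 _

lemma delSub_csub {c : R} (M : Matrix V V R) (S : Set V) :
    delSub (c • (1 : Matrix V V R) - M) S
      = c • (1 : Matrix {w : V // w ∉ S} {w : V // w ∉ S} R) - delSub M S := by
  ext a b
  simp [delSub, Matrix.one_apply, Subtype.ext_iff]

lemma det_updateRow_single_of_not_reachable (G : SimpleGraph V) (A : Matrix V V R)
    (hA : ∀ i j, i ≠ j → ¬ G.Adj i j → A i j = 0)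
    {a b : V} (hr : ¬ G.Reachable a b) :
    (A.updateRow a (Pi.single b 1)).det = 0 := by
  classical
  set N := A.updateRow a (Pi.single b 1) with hN
  rw [Matrix.det_apply]
  refine Finset.sum_eq_zero fun σ _ => ?_
  suffices h : (∏ i, N (σ i) i) = 0 by rw [h, smul_zero]
  by_contra hcon
  have hcon' : ∀ i, N (σ i) i ≠ 0 := by
    intro i hi
    exact hcon (Finset.prod_eq_zero (Finset.mem_univ i) hi)
  set S : Finset V := Finset.univ.filter (fun w => G.Reachable b w) with hS
  have ha_not : a ∉ S := by
    simp only [hS, Finset.mem_filter, Finset.mem_univ, true_and]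
    exact fun h => hr h.symm
  have hstep : ∀ j ∈ S, σ⁻¹ j ∈ S := by
    intro j hj
    have hreach : G.Reachable b j := (Finset.mem_filter.mp hj).2
    have hja : j ≠ a := fun h => ha_not (h ▸ hj)
    have hNj : N (σ (σ⁻¹ j)) (σ⁻¹ j) ≠ 0 := hcon' (σ⁻¹ j)
    rw [Equiv.Perm.coe_inv, Equiv.apply_symm_apply] at hNj
    rw [hN, Matrix.updateRow_ne hja] at hNj
    rcases eq_or_ne (σ⁻¹ j) j with hfix | hne
    · rw [hfix]; exact hj
    · have hadj : G.Adj j (σ⁻¹ j) := by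
        by_contra hnadj
        exact hNj (hA j (σ⁻¹ j) (Ne.symm hne) hnadj)
      exact Finset.mem_filter.mpr ⟨Finset.mem_univ _, hreach.trans hadj.reachable⟩
  have himg : S.image (fun j => σ⁻¹ j) = S := by
    apply Finset.eq_of_subset_of_card_le
    · intro x hx
      obtain ⟨j, hj, rfl⟩ := Finset.mem_image.mp hx
      exact hstep j hj
    · rw [Finset.card_image_of_injective _ (Equiv.injective _)]
  have hb_mem : b ∈ S := Finset.mem_filter.mpr ⟨Finset.mem_univ _, SimpleGraph.Reachable.refl b⟩
  have hσb : σ b ∈ S := by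
    rw [← himg] at hb_mem
    obtain ⟨j, hj, hjb⟩ := Finset.mem_image.mp hb_mem
    have : j = σ b := by
      have := congrArg σ hjb
      rwa [Equiv.Perm.coe_inv, Equiv.apply_symm_apply] at this
    rwa [this] at hj
  have hNa : N (σ (σ⁻¹ a)) (σ⁻¹ a) ≠ 0 := hcon' (σ⁻¹ a)
  rw [Equiv.Perm.coe_inv, Equiv.apply_symm_apply, hN, Matrix.updateRow_self] at hNa
  have hinv : σ⁻¹ a = b := by
    by_contra hne
    exact hNa (Pi.single_eq_of_ne hne 1)
  have : a = σ b := by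
    have := congrArg σ hinv
    rwa [Equiv.Perm.coe_inv, Equiv.apply_symm_apply] at this
  rw [← this] at hσb
  exact ha_not hσb

lemma det_three (M : Matrix V V R) (i : V) {r : V → R} (s t : V → R) (hbase : M i = r) (a b : R) :
    (M.updateRow i (r + a • s + b • t)).det
      = M.det + a * (M.updateRow i s).det + b * (M.updateRow i t).det := by
  rw [Matrix.det_updateRow_add, Matrix.det_updateRow_add, Matrix.det_updateRow_smul,
    Matrix.det_updateRow_smul, ← hbase, Matrix.updateRow_eq_self]

lemma det_single_pair_swap (A : Matrix V V R) {u v : V} (huv : u ≠ v) :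
    ((A.updateRow v (Pi.single u 1)).updateRow u (Pi.single v 1)).det
      = - (delSub A ({u, v} : Set V)).det := by
  classical
  set B := (A.updateRow v (Pi.single u 1)).updateRow u (Pi.single v 1) with hB
  have hperm := Matrix.det_permute' (Equiv.swap u v) B
  have hsub : B.submatrix id (Equiv.swap u v)
      = ((A.submatrix id (Equiv.swap u v)).updateRow v (Pi.single v 1)).updateRow u
          (Pi.single u 1) := by
    ext i j
    rcases eq_or_ne u i with rfl | hiu
    · rw [Matrix.submatrix_apply, id_eq, hB]
      rw [Matrix.updateRow_self, Matrix.updateRow_self]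
      rcases eq_or_ne u j with rfl | hju
      · rw [Equiv.swap_apply_left]; simp
      · rcases eq_or_ne v j with rfl | hjv
        · rw [Equiv.swap_apply_right]
          rw [Pi.single_eq_of_ne huv.symm, Pi.single_eq_of_ne huv]
        · rw [Equiv.swap_apply_of_ne_of_ne hju.symm hjv.symm,
            Pi.single_eq_of_ne hjv.symm, Pi.single_eq_of_ne hju.symm]
    · rcases eq_or_ne v i with rfl | hiv
      · rw [Matrix.submatrix_apply, id_eq, hB, Matrix.updateRow_ne huv.symm,
          Matrix.updateRow_self, Matrix.updateRow_ne huv.symm, Matrix.updateRow_self]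
        rcases eq_or_ne u j with rfl | hju
        · rw [Equiv.swap_apply_left, Pi.single_eq_of_ne huv.symm, Pi.single_eq_of_ne huv]
        · rcases eq_or_ne v j with rfl | hjv
          · rw [Equiv.swap_apply_right]; simp
          · rw [Equiv.swap_apply_of_ne_of_ne hju.symm hjv.symm,
              Pi.single_eq_of_ne hju.symm, Pi.single_eq_of_ne hjv.symm]
      · rw [Matrix.submatrix_apply, id_eq, hB, Matrix.updateRow_ne hiu.symm,
          Matrix.updateRow_ne hiv.symm, Matrix.updateRow_ne hiu.symm,
          Matrix.updateRow_ne hiv.symm, Matrix.submatrix_apply, id_eq]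
  have hpair := det_single_pair (A.submatrix id (Equiv.swap u v)) huv
  have hdel : delSub (A.submatrix id (Equiv.swap u v)) ({u, v} : Set V)
      = delSub A ({u, v} : Set V) := by
    ext a b
    have hb := b.2
    simp only [Set.mem_insert_iff, Set.mem_singleton_iff, not_or] at hb
    simp [delSub, Matrix.submatrix, Equiv.swap_apply_of_ne_of_ne hb.1 hb.2]
  rw [hsub, hpair, hdel] at hperm
  rw [Equiv.Perm.sign_swap huv] at hperm
  simp only [Units.val_neg, Units.val_one, Int.cast_neg, Int.cast_one, neg_mul, one_mul] at hperm
  rw [hperm, neg_neg]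

end AuxLemmas

theorem tree_det_edge_recursion
    {V : Type*} [Fintype V] [DecidableEq V]
    (T : SimpleGraph V) [DecidableRel T.Adj] (hT : T.IsTree) (β γ : ℝ)
    (u v : V) (he : T.Adj u v) :
    phi (hMat β γ T) =
      phi (hMat β γ (T.deleteEdges {s(u, v)}))
        - Polynomial.C β * phi (delSub (hMat β γ (T.deleteEdges {s(u, v)})) {v})
        - Polynomial.C β * phi (delSub (hMat β γ (T.deleteEdges {s(u, v)})) {u})
        + Polynomial.C (β ^ 2 - γ ^ 2) * phi (delSub (hMat β γ T) {u, v}) := by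
  classical
  have huv : u ≠ v := he.ne
  set F := T.deleteEdges {s(u, v)} with hFdef
  have hbr : T.IsBridge s(u, v) :=
    (SimpleGraph.isAcyclic_iff_forall_adj_isBridge.mp hT.IsAcyclic) he
  have hreach : ¬ F.Reachable u v := SimpleGraph.isBridge_iff.mp hbr
  have hreach' : ¬ F.Reachable v u := fun h => hreach h.symm
  have hFadj : ∀ i j, F.Adj i j ↔ (T.Adj i j ∧ ¬ s(i, j) = s(u, v)) := by
    intro i j
    rw [hFdef]
    simp
  have hadj_ne : ∀ i j, i ≠ u → i ≠ v → (F.Adj i j ↔ T.Adj i j) := by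
    intro i j hiu hiv
    rw [hFadj]
    constructor
    · exact And.left
    · intro h
      refine ⟨h, fun hs => ?_⟩
      rcases Sym2.eq_iff.mp hs with ⟨rfl, rfl⟩ | ⟨rfl, rfl⟩
      · exact hiu rfl
      · exact hiv rfl
  have hdeg_ne : ∀ i, i ≠ u → i ≠ v → F.degree i = T.degree i := by
    intro i hiu hiv
    rw [← SimpleGraph.card_neighborFinset_eq_degree, ← SimpleGraph.card_neighborFinset_eq_degree]
    congr 1
    ext w
    simp only [SimpleGraph.mem_neighborFinset]
    exact hadj_ne i w hiu hiv
  have hnbr_u : F.neighborFinset u = (T.neighborFinset u).erase v := by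
    ext w
    simp only [SimpleGraph.mem_neighborFinset, Finset.mem_erase, hFadj]
    constructor
    · rintro ⟨hadj, hs⟩
      exact ⟨fun hwv => hs (by rw [hwv]), hadj⟩
    · rintro ⟨hwv, hadj⟩
      refine ⟨hadj, fun hs => ?_⟩
      rcases Sym2.eq_iff.mp hs with ⟨-, rfl⟩ | ⟨rfl, rfl⟩
      · exact hwv rfl
      · exact huv rfl
  have hnbr_v : F.neighborFinset v = (T.neighborFinset v).erase u := by
    ext w
    simp only [SimpleGraph.mem_neighborFinset, Finset.mem_erase, hFadj]
    constructor
    · rintro ⟨hadj, hs⟩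
      exact ⟨fun hwv => hs (by rw [hwv]; exact Sym2.eq_swap), hadj⟩
    · rintro ⟨hwv, hadj⟩
      refine ⟨hadj, fun hs => ?_⟩
      rcases Sym2.eq_iff.mp hs with ⟨rfl, rfl⟩ | ⟨-, rfl⟩
      · exact huv rfl
      · exact hwv rfl
  have hdeg_u : T.degree u = F.degree u + 1 := by
    rw [← SimpleGraph.card_neighborFinset_eq_degree, ← SimpleGraph.card_neighborFinset_eq_degree,
      hnbr_u, Finset.card_erase_of_mem ((SimpleGraph.mem_neighborFinset _ _ _).mpr he)]
    have hpos : 0 < (T.neighborFinset u).card :=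
      Finset.card_pos.mpr ⟨v, (SimpleGraph.mem_neighborFinset _ _ _).mpr he⟩
    omega
  have hdeg_v : T.degree v = F.degree v + 1 := by
    rw [← SimpleGraph.card_neighborFinset_eq_degree, ← SimpleGraph.card_neighborFinset_eq_degree,
      hnbr_v, Finset.card_erase_of_mem ((SimpleGraph.mem_neighborFinset _ _ _).mpr he.symm)]
    have hpos : 0 < (T.neighborFinset v).card :=
      Finset.card_pos.mpr ⟨u, (SimpleGraph.mem_neighborFinset _ _ _).mpr he.symm⟩
    omega
  have hFadj_uv : ¬ F.Adj u v := fun h => ((hFadj u v).mp h).2 rfl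
  have hFadj_vu : ¬ F.Adj v u := fun h => hFadj_uv h.symm
  have hadj_u : ∀ j, j ≠ v → (F.Adj u j ↔ T.Adj u j) := by
    intro j hjv
    rw [hFadj]
    constructor
    · exact And.left
    · intro h
      refine ⟨h, fun hs => ?_⟩
      rcases Sym2.eq_iff.mp hs with ⟨-, rfl⟩ | ⟨rfl, rfl⟩
      · exact hjv rfl
      · exact huv rfl
  have hadj_v : ∀ j, j ≠ u → (F.Adj v j ↔ T.Adj v j) := by
    intro j hju
    rw [hFadj]
    constructor
    · exact And.left
    · intro h
      refine ⟨h, fun hs => ?_⟩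
      rcases Sym2.eq_iff.mp hs with ⟨rfl, rfl⟩ | ⟨-, rfl⟩
      · exact huv rfl
      · exact hju rfl
  simp only [phi]
  set A : Matrix V V (Polynomial ℝ) :=
    (Polynomial.X : Polynomial ℝ) • (1 : Matrix V V (Polynomial ℝ)) - hMat β γ F with hAdef
  set eu : V → Polynomial ℝ := Pi.single u 1 with heu
  set ev : V → Polynomial ℝ := Pi.single v 1 with hev
  have hentry : ∀ i j, i ≠ u → i ≠ v → hMat β γ T i j = hMat β γ F i j := by
    intro i j hiu hiv
    simp only [hMat, degMat, Matrix.add_apply, Matrix.smul_apply, Matrix.diagonal_apply,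
      SimpleGraph.adjMatrix_apply, smul_eq_mul]
    rw [hdeg_ne i hiu hiv]
    by_cases hadj : T.Adj i j
    · rw [if_pos hadj, if_pos ((hadj_ne i j hiu hiv).mpr hadj)]
    · rw [if_neg hadj, if_neg (fun h => hadj ((hadj_ne i j hiu hiv).mp h))]
  have hrow_u : ∀ j, hMat β γ T u j
      = hMat β γ F u j + Polynomial.C β * eu j + Polynomial.C γ * ev j := by
    intro j
    rcases eq_or_ne u j with rfl | hju
    · simp only [hMat, degMat, Matrix.add_apply, Matrix.smul_apply, smul_eq_mul,
        Matrix.diagonal_apply_eq, SimpleGraph.adjMatrix_apply, if_neg (T.irrefl),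
        if_neg (F.irrefl), heu, hev, Pi.single_eq_same, Pi.single_eq_of_ne huv]
      rw [hdeg_u]
      push_cast
      ring
    · rcases eq_or_ne v j with rfl | hjv
      · simp only [hMat, degMat, Matrix.add_apply, Matrix.smul_apply, smul_eq_mul,
          SimpleGraph.adjMatrix_apply, Matrix.diagonal_apply_ne _ huv, if_pos he,
          if_neg hFadj_uv, heu, hev, Pi.single_eq_same, Pi.single_eq_of_ne huv.symm]
        ring
      · simp only [hMat, degMat, Matrix.add_apply, Matrix.smul_apply, smul_eq_mul,
          SimpleGraph.adjMatrix_apply, Matrix.diagonal_apply_ne _ hju,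
          heu, hev, Pi.single_eq_of_ne (Ne.symm hju), Pi.single_eq_of_ne (Ne.symm hjv)]
        by_cases hadj : T.Adj u j
        · rw [if_pos hadj, if_pos ((hadj_u j (Ne.symm hjv)).mpr hadj)]
          ring
        · rw [if_neg hadj, if_neg (fun h => hadj ((hadj_u j (Ne.symm hjv)).mp h))]
          ring
  have hrow_v : ∀ j, hMat β γ T v j
      = hMat β γ F v j + Polynomial.C β * ev j + Polynomial.C γ * eu j := by
    intro j
    rcases eq_or_ne v j with rfl | hjv
    · simp only [hMat, degMat, Matrix.add_apply, Matrix.smul_apply, smul_eq_mul,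
        Matrix.diagonal_apply_eq, SimpleGraph.adjMatrix_apply, if_neg (T.irrefl),
        if_neg (F.irrefl), heu, hev, Pi.single_eq_same, Pi.single_eq_of_ne huv.symm]
      rw [hdeg_v]
      push_cast
      ring
    · rcases eq_or_ne u j with rfl | hju
      · simp only [hMat, degMat, Matrix.add_apply, Matrix.smul_apply, smul_eq_mul,
          SimpleGraph.adjMatrix_apply, Matrix.diagonal_apply_ne _ huv.symm, if_pos he.symm,
          if_neg hFadj_vu, heu, hev, Pi.single_eq_same, Pi.single_eq_of_ne huv]
        ring
      · simp only [hMat, degMat, Matrix.add_apply, Matrix.smul_apply, smul_eq_mul,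
          SimpleGraph.adjMatrix_apply, Matrix.diagonal_apply_ne _ hjv,
          heu, hev, Pi.single_eq_of_ne (Ne.symm hjv), Pi.single_eq_of_ne (Ne.symm hju)]
        by_cases hadj : T.Adj v j
        · rw [if_pos hadj, if_pos ((hadj_v j (Ne.symm hju)).mpr hadj)]
          ring
        · rw [if_neg hadj, if_neg (fun h => hadj ((hadj_v j (Ne.symm hju)).mp h))]
          ring
  set ru : V → Polynomial ℝ := A u + (-(Polynomial.C β)) • eu + (-(Polynomial.C γ)) • ev with hru
  set rv : V → Polynomial ℝ := A v + (-(Polynomial.C β)) • ev + (-(Polynomial.C γ)) • eu with hrv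
  have hmx : (Polynomial.X : Polynomial ℝ) • (1 : Matrix V V (Polynomial ℝ)) - hMat β γ T
      = (A.updateRow u ru).updateRow v rv := by
    ext i j
    rcases eq_or_ne v i with rfl | hiv
    · rw [Matrix.updateRow_self, hrv]
      simp only [Pi.add_apply, Pi.smul_apply, smul_eq_mul, hAdef, Matrix.sub_apply,
        Matrix.smul_apply]
      rw [hrow_v j]
      ring
    · rw [Matrix.updateRow_ne (Ne.symm hiv)]
      rcases eq_or_ne u i with rfl | hiu
      · rw [Matrix.updateRow_self, hru]
        simp only [Pi.add_apply, Pi.smul_apply, smul_eq_mul, hAdef, Matrix.sub_apply,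
          Matrix.smul_apply]
        rw [hrow_u j]
        ring
      · rw [Matrix.updateRow_ne (Ne.symm hiu)]
        simp only [hAdef, Matrix.sub_apply]
        rw [hentry i j (Ne.symm hiu) (Ne.symm hiv)]
  have hAoff : ∀ i j, i ≠ j → ¬ F.Adj i j → A i j = 0 := by
    intro i j hij hnadj
    simp only [hAdef, Matrix.sub_apply, Matrix.smul_apply, smul_eq_mul,
      Matrix.one_apply_ne hij, hMat, degMat, Matrix.add_apply,
      Matrix.diagonal_apply_ne _ hij, SimpleGraph.adjMatrix_apply, if_neg hnadj]
    ring
  have hZ_u : (A.updateRow u ev).det = 0 := by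
    rw [hev]
    exact det_updateRow_single_of_not_reachable F A hAoff hreach
  have hZ_v : (A.updateRow v eu).det = 0 := by
    rw [heu]
    exact det_updateRow_single_of_not_reachable F A hAoff hreach'
  have hDu : (A.updateRow u eu).det = (delSub A ({u} : Set V)).det := by
    rw [heu]; exact det_single_self A u
  have hDv : (A.updateRow v ev).det = (delSub A ({v} : Set V)).det := by
    rw [hev]; exact det_single_self A v
  have hPair : ((A.updateRow v ev).updateRow u eu).det = (delSub A ({u, v} : Set V)).det := by
    rw [heu, hev]; exact det_single_pair A huv
  have hPairSwap : ((A.updateRow v eu).updateRow u ev).det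
      = - (delSub A ({u, v} : Set V)).det := by
    rw [heu, hev]; exact det_single_pair_swap A huv
  have hZero1 : ((A.updateRow v ev).updateRow u ev).det = 0 := by
    apply Matrix.det_zero_of_row_eq huv
    rw [Matrix.updateRow_self, Matrix.updateRow_ne (Ne.symm huv), Matrix.updateRow_self]
  have hZero2 : ((A.updateRow v eu).updateRow u eu).det = 0 := by
    apply Matrix.det_zero_of_row_eq huv
    rw [Matrix.updateRow_self, Matrix.updateRow_ne (Ne.symm huv), Matrix.updateRow_self]
  have hstep1 : ((A.updateRow u ru).updateRow v rv).det
      = (A.updateRow u ru).det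
        + (-(Polynomial.C β)) * ((A.updateRow u ru).updateRow v ev).det
        + (-(Polynomial.C γ)) * ((A.updateRow u ru).updateRow v eu).det := by
    rw [hrv]
    exact det_three _ v ev eu (Matrix.updateRow_ne (Ne.symm huv)) _ _
  have hcomm : ∀ w, (A.updateRow u ru).updateRow v w = (A.updateRow v w).updateRow u ru :=
    fun w => _root_.updateRow_comm A huv ru w
  have hstep2 : (A.updateRow u ru).det
      = A.det + (-(Polynomial.C β)) * (A.updateRow u eu).det
        + (-(Polynomial.C γ)) * (A.updateRow u ev).det := by
    rw [hru]
    exact det_three A u eu ev rfl _ _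
  have hexp : ∀ w : V → Polynomial ℝ, ((A.updateRow v w).updateRow u ru).det
      = (A.updateRow v w).det + (-(Polynomial.C β)) * ((A.updateRow v w).updateRow u eu).det
        + (-(Polynomial.C γ)) * ((A.updateRow v w).updateRow u ev).det := by
    intro w
    rw [hru]
    exact det_three _ u eu ev (Matrix.updateRow_ne huv) _ _
  have hbig : ((A.updateRow u ru).updateRow v rv).det
      = A.det - Polynomial.C β * (delSub A ({v} : Set V)).det
        - Polynomial.C β * (delSub A ({u} : Set V)).det
        + (Polynomial.C β * Polynomial.C β - Polynomial.C γ * Polynomial.C γ)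
            * (delSub A ({u, v} : Set V)).det := by
    rw [hstep1, hcomm ev, hcomm eu, hexp ev, hexp eu, hstep2,
      hZ_u, hZ_v, hDu, hDv, hPair, hPairSwap, hZero1, hZero2]
    ring
  have hφm : ∀ S : Set V, delSub A S
      = (Polynomial.X : Polynomial ℝ) • (1 : Matrix {w : V // w ∉ S} {w : V // w ∉ S} (Polynomial ℝ))
          - delSub (hMat β γ F) S := by
    intro S
    rw [hAdef]
    exact delSub_csub _ _
  have hdelT : delSub (hMat β γ T) ({u, v} : Set V) = delSub (hMat β γ F) ({u, v} : Set V) := by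
    refine Matrix.ext fun a b => ?_
    have ha := a.2
    simp only [Set.mem_insert_iff, Set.mem_singleton_iff, not_or] at ha
    exact hentry a.val b.val ha.1 ha.2
  have hC : Polynomial.C (β ^ 2 - γ ^ 2)
      = Polynomial.C β * Polynomial.C β - Polynomial.C γ * Polynomial.C γ := by
    rw [map_sub, map_pow, map_pow, sq, sq]
  rw [hmx, hbig, hdelT, hC]
  simp only [hφm]
  rfl
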